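/- Among all matrices B with exactly one entry equal to 1 and all other entries 0, B = E_{n,1} is the unique choice such that N + B is invertible, where N is the n×n nilpotent single Jordan block (superdiagonal of ones). -/

import Mathlib

open Matrix

theorem stmt6 (n : ℕ) (hn : 2 ≤ n) (N : Matrix (Fin n) (Fin n) ℂ)
    (hN : ∀ i j, N i j = if (i : ℕ) + 1 = (j : ℕ) then 1 else 0)
    (i j : Fin n) :
    (N + Matrix.single i j 1).det ≠ 0 ↔ ((i : ℕ) = n - 1 ∧ (j : ℕ) = 0) := by
  constructor
  · intro hdet
    constructor
    · by_contra hi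
      apply hdet
      apply Matrix.det_eq_zero_of_row_eq_zero ⟨n - 1, by omega⟩
      intro l
      simp only [Matrix.add_apply, hN, Matrix.single, Matrix.of_apply]
      have h1 : ¬ (n - 1 + 1 = (l : ℕ)) := by omega
      have h2 : i ≠ (⟨n - 1, by omega⟩ : Fin n) := by
        intro h; apply hi; rw [h]
      rw [if_neg (by simpa using h1), if_neg (by simp [h2.symm] at *; tauto)]
      ring
    · by_contra hj
      apply hdet
      apply Matrix.det_eq_zero_of_column_eq_zero ⟨0, by omega⟩
      intro k
      simp only [Matrix.add_apply, hN, Matrix.single, Matrix.of_apply]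
      have h2 : j ≠ (⟨0, by omega⟩ : Fin n) := by
        intro h; apply hj; rw [h]
      rw [if_neg (by omega), if_neg (by simp [h2.symm] at *; tauto)]
      ring
  · rintro ⟨hi, hj⟩
    obtain ⟨m, rfl⟩ : ∃ m, n = m + 1 := ⟨n - 1, by omega⟩
    have hA : N + Matrix.single i j 1 = (finRotate (m+1)).permMatrix ℂ := by
      ext k l
      simp only [Matrix.add_apply, hN, Matrix.single, Matrix.of_apply,
        Equiv.Perm.permMatrix, PEquiv.toMatrix_apply, Equiv.toPEquiv_apply,
        Option.mem_def, Option.some.injEq, finRotate_succ_apply]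
      have hiv : i = Fin.last m := by ext; simpa using hi
      have hjv : j = 0 := by ext; simpa using hj
      subst hiv hjv
      rcases eq_or_ne k (Fin.last m) with hk | hk
      · subst hk
        have : ((Fin.last m : Fin (m+1)) : ℕ) + 1 ≠ (l : ℕ) := by
          have := l.isLt; simp; omega
        rw [if_neg this]
        have : (Fin.last m) + 1 = 0 := by
          ext; simp [Fin.val_add_one]
        rw [this]
        by_cases hl : l = 0
        · subst hl; simp
        · rw [if_neg (fun h : (0 : Fin (m+1)) = l => hl h.symm),
              if_neg (fun h => hl h.2.symm)]
          ring
      · have hklt : (k : ℕ) < m := by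
          have := k.isLt
          rcases lt_or_eq_of_le (Nat.lt_succ_iff.mp this) with h | h
          · exact h
          · exact absurd (Fin.ext h : k = Fin.last m) hk
        have hadd : ((k + 1 : Fin (m+1)) : ℕ) = (k : ℕ) + 1 := by
          rw [Fin.val_add_one, if_neg hk]
        rw [if_neg (show ¬(Fin.last m = k ∧ (0 : Fin (m+1)) = l) from
              fun h => hk h.1.symm)]
        by_cases hl : (k : ℕ) + 1 = (l : ℕ)
        · rw [if_pos hl, if_pos (show k + 1 = l from by ext; rw [hadd]; exact hl)]
          ring
        · rw [if_neg hl, if_neg (fun h => hl (by rw [← hadd, h]))]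
          ring
    rw [hA, Matrix.det_permutation]
    rcases Int.units_eq_one_or (Equiv.Perm.sign (finRotate (m+1))) with h | h <;>
      rw [h] <;> norm_num
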